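/- Let F be a field and P ∈ F[X₁,…,Xₙ] a polynomial that is not identically zero on {0,1}ⁿ. If W = max{wt(u) : u ∈ {0,1}ⁿ, P(u) ≠ 0}, then deg(P) ≥ n − W. -/
import Mathlib


/-- The weight of a point of the hypercube: the number of coordinates equal to 1. -/
noncomputable def wt {F : Type*} [Field F] {n : ℕ} (u : Fin n → F) : ℕ :=
  Nat.card {i : Fin n // u i = 1}

theorem max_weight_bound {F : Type*} [Field F] {n W : ℕ}
    (P : MvPolynomial (Fin n) F)
    (hW : IsGreatest {m : ℕ | ∃ u : Fin n → F, (∀ i, u i = 0 ∨ u i = 1) ∧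
      MvPolynomial.eval u P ≠ 0 ∧ wt u = m} W) :
    n - W ≤ P.totalDegree := by
  classical
  by_contra hcon
  push_neg at hcon
  obtain ⟨u, hu01, huP, hwtu⟩ := hW.1
  set S : Finset (Fin n) := Finset.univ.filter (fun i => u i = 1) with hSdef
  have hScard : S.card = W := by
    rw [wt, Nat.card_eq_fintype_card, Fintype.card_subtype] at hwtu
    exact hwtu
  set T : Finset (Fin n) := Sᶜ with hTdef
  have hTcard : T.card = n - W := by
    rw [hTdef, Finset.card_compl, hScard, Fintype.card_fin]
  have huT : ∀ i ∈ T, u i = 0 := by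
    intro i hi
    rw [hTdef, Finset.mem_compl, hSdef, Finset.mem_filter] at hi
    rcases hu01 i with h | h
    · exact h
    · exact absurd ⟨Finset.mem_univ i, h⟩ hi
  set v : Finset (Fin n) → Fin n → F := fun s i => if i ∈ s then 1 else u i with hvdef
  -- Claim 1: the alternating sum equals P(u)
  have key : ∑ s ∈ T.powerset, (-1 : F) ^ s.card * MvPolynomial.eval (v s) P
      = MvPolynomial.eval u P := by
    rw [Finset.sum_eq_single_of_mem ∅ (Finset.empty_mem_powerset T)]
    · simp [hvdef]
    · intro s hs hsne
      rw [Finset.mem_powerset] at hs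
      have hv01 : ∀ i, v s i = 0 ∨ v s i = 1 := by
        intro i
        by_cases hi : i ∈ s
        · right; simp [hvdef, hi]
        · simpa [hvdef, hi] using hu01 i
      have hwts : wt (v s) = W + s.card := by
        rw [wt, Nat.card_eq_fintype_card, Fintype.card_subtype]
        have hset : Finset.univ.filter (fun i => v s i = 1) = S ∪ s := by
          ext i
          simp only [Finset.mem_filter, Finset.mem_univ, true_and, Finset.mem_union,
            hvdef, hSdef]
          by_cases hi : i ∈ s
          · simp [hi]
          · simp [hi]
        have hdisj : Disjoint S s := by
          refine Finset.disjoint_left.mpr ?_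
          intro i hiS his
          have := hs his
          rw [hTdef, Finset.mem_compl] at this
          exact this hiS
        rw [hset, Finset.card_union_of_disjoint hdisj, hScard]
      have hz : MvPolynomial.eval (v s) P = 0 := by
        by_contra hnz
        have : W + s.card ≤ W := hW.2 ⟨v s, hv01, hnz, hwts⟩
        have : s.card = 0 := by omega
        exact hsne (Finset.card_eq_zero.mp this)
      rw [hz, mul_zero]
  -- Claim 2: the alternating sum equals 0
  have zero : ∑ s ∈ T.powerset, (-1 : F) ^ s.card * MvPolynomial.eval (v s) P = 0 := by
    have heval : ∀ s ∈ T.powerset, MvPolynomial.eval (v s) P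
        = ∑ d ∈ P.support, P.coeff d * ∏ i, (v s i) ^ d i :=
      fun s _ => MvPolynomial.eval_eq' _ _
    calc ∑ s ∈ T.powerset, (-1 : F) ^ s.card * MvPolynomial.eval (v s) P
        = ∑ s ∈ T.powerset, ∑ d ∈ P.support,
            P.coeff d * ((-1 : F) ^ s.card * ∏ i, (v s i) ^ d i) := by
          refine Finset.sum_congr rfl fun s hs => ?_
          rw [heval s hs, Finset.mul_sum]
          refine Finset.sum_congr rfl fun d _ => by ring
      _ = ∑ d ∈ P.support, ∑ s ∈ T.powerset,
            P.coeff d * ((-1 : F) ^ s.card * ∏ i, (v s i) ^ d i) := Finset.sum_comm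
      _ = 0 := by
          refine Finset.sum_eq_zero fun d hd => ?_
          rw [← Finset.mul_sum]
          -- simplify the inner product
          have hprod : ∀ s ∈ T.powerset,
              (∏ i, (v s i) ^ d i) = ∏ i ∈ T \ s, (0 : F) ^ d i := by
            intro s hs
            rw [Finset.mem_powerset] at hs
            rw [← Finset.prod_compl_mul_prod T (f := fun i => (v s i) ^ d i)]
            have h1 : ∏ i ∈ Tᶜ, (v s i) ^ d i = 1 := by
              refine Finset.prod_eq_one fun i hi => ?_
              rw [hTdef, compl_compl, hSdef, Finset.mem_filter] at hi
              have hvi : v s i = 1 := by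
                by_cases his : i ∈ s <;> simp [hvdef, his, hi.2]
              rw [hvi, one_pow]
            rw [h1, one_mul, ← Finset.prod_sdiff hs]
            have h2 : ∏ i ∈ s, (v s i) ^ d i = 1 := by
              refine Finset.prod_eq_one fun i hi => ?_
              simp [hvdef, hi]
            rw [h2, mul_one]
            refine Finset.prod_congr rfl fun i hi => ?_
            rw [Finset.mem_sdiff] at hi
            have : v s i = 0 := by
              simp [hvdef, hi.2, huT i hi.1]
            rw [this]
          have hsum : ∑ s ∈ T.powerset, (-1 : F) ^ s.card * ∏ i, (v s i) ^ d i
              = ∏ i ∈ T, ((-1 : F) + (0 : F) ^ d i) := by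
            rw [Finset.prod_add]
            refine Finset.sum_congr rfl fun s hs => ?_
            rw [hprod s hs, Finset.prod_const]
          rw [hsum]
          -- some i ∈ T has d i = 0
          have hex : ∃ i ∈ T, d i = 0 := by
            by_contra hne
            push_neg at hne
            have h1 : T.card ≤ ∑ i ∈ T, d i := by
              calc T.card = ∑ i ∈ T, 1 := by simp
                _ ≤ ∑ i ∈ T, d i := Finset.sum_le_sum fun i hi =>
                    Nat.one_le_iff_ne_zero.mpr (hne i hi)
            have h2 : ∑ i ∈ T, d i ≤ ∑ i, d i :=
              Finset.sum_le_sum_of_subset (Finset.subset_univ T)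
            have h3 : (∑ i, d i) = d.sum fun _ e => e := by
              rw [Finsupp.sum_fintype]
              intro; rfl
            have h4 := MvPolynomial.le_totalDegree hd
            omega
          obtain ⟨i, hiT, hdi⟩ := hex
          rw [Finset.prod_eq_zero hiT (by rw [hdi, pow_zero]; ring), mul_zero]
  exact huP (key ▸ zero)
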